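/- Let 𝒜 be an additive category admitting countable products and countable coproducts, and let M be an object of 𝒜 such that the diagonal morphism diag : M → ∏_{n∈ℕ} M factors through the canonical comparison morphism ⊕_{n∈ℕ} M → ∏_{n∈ℕ} M. Then for every compact object K of 𝒜, every morphism K → M is zero, i.e. Hom_𝒜(K, M) = 0. -/

import Mathlib

/-!
Statement 0: Let 𝒜 be an additive category with countable products and coproducts, and M an
object such that the diagonal M → ∏_ℕ M factors through the canonical comparison
⊕_ℕ M → ∏_ℕ M.  Then every morphism from a compact object K to M is zero.
Compactness of K is expressed as: Hom(K,-) (i.e. the coyoneda functor at K) preserves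
filtered colimits.
-/

open CategoryTheory Limits

universe v u

noncomputable section

variable {𝒜 : Type u} [Category.{v} 𝒜] [Preadditive 𝒜]
  [HasCountableProducts 𝒜] [HasCountableCoproducts 𝒜]

/-- The canonical comparison morphism `⊕_ℕ M ⟶ ∏_ℕ M`. -/
def coprodToProd (M : 𝒜) : (∐ fun _ : ℕ => M) ⟶ ∏ᶜ fun _ : ℕ => M :=
  Sigma.desc fun i => Pi.lift fun j => if i = j then 𝟙 M else 0

namespace Statement0Aux

/-- The diagram of finite subcoproducts of `⊕_ℕ M`. -/
abbrev D (M : 𝒜) : Finset (Discrete ℕ) ⥤ 𝒜 :=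
  CoproductsFromFiniteFiltered.liftToFinsetObj (Discrete.functor fun _ : ℕ => M)

/-- The inclusion of `M` into the singleton-stage of the diagram. -/
def inj (M : 𝒜) (n : ℕ) : M ⟶ (D M).obj {Discrete.mk n} :=
  Sigma.ι (fun x : ({Discrete.mk n} : Finset (Discrete ℕ)) =>
    (Discrete.functor fun _ : ℕ => M).obj x.1) ⟨Discrete.mk n, Finset.mem_singleton_self _⟩

/-- The cocone over the finite-subcoproduct diagram with point `⊕_ℕ M`. -/
def coc (M : 𝒜) : Cocone (D M) where
  pt := ∐ fun _ : ℕ => M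
  ι :=
    { app := fun s => Sigma.desc fun x => Sigma.ι (fun _ : ℕ => M) x.1.as
      naturality := by
        intro s s' h
        dsimp [CoproductsFromFiniteFiltered.liftToFinsetObj]
        refine Sigma.hom_ext _ _ (fun x => ?_)
        erw [Sigma.ι_desc_assoc, Sigma.ι_desc, Category.comp_id, Sigma.ι_desc] }

lemma inj_comp_coc (M : 𝒜) (n : ℕ) :
    inj M n ≫ (coc M).ι.app {Discrete.mk n} = Sigma.ι (fun _ : ℕ => M) n := by
  exact colimit.ι_desc _ _

/-- `⊕_ℕ M` is the (filtered) colimit of its finite subcoproducts. -/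
def cocIsColimit (M : 𝒜) : IsColimit (coc M) where
  desc s' := Sigma.desc fun n => inj M n ≫ s'.ι.app {Discrete.mk n}
  fac s' s := by
    dsimp [coc]
    refine Sigma.hom_ext _ _ (fun ⟨⟨x⟩, hx⟩ => ?_)
    have h : ({Discrete.mk x} : Finset (Discrete ℕ)) ⟶ s := homOfLE (by simpa using hx)
    erw [Sigma.ι_desc_assoc, Sigma.ι_desc]
    erw [← s'.w h, ← Category.assoc]
    congr 1
    dsimp [inj, CoproductsFromFiniteFiltered.liftToFinsetObj]
    erw [Sigma.ι_desc]
    rfl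
  uniq s' m hm := by
    dsimp [coc]
    refine Sigma.hom_ext _ _ (fun n => ?_)
    erw [Sigma.ι_desc, ← inj_comp_coc M n, Category.assoc, hm]

end Statement0Aux

theorem statement0 (M : 𝒜)
    (hfact : ∃ t : M ⟶ ∐ fun _ : ℕ => M,
      t ≫ coprodToProd M = Pi.lift fun _ : ℕ => 𝟙 M)
    (K : 𝒜)
    [PreservesFilteredColimitsOfSize.{v, v} (coyoneda.obj (Opposite.op K))]
    (f : K ⟶ M) : f = 0 := by
  obtain ⟨t, ht⟩ := hfact
  haveI : IsFiltered (AsSmall.{v} (Finset (Discrete ℕ))) :=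
    IsFiltered.of_equivalence AsSmall.equiv
  haveI : PreservesColimitsOfShape (Finset (Discrete ℕ)) (coyoneda.obj (Opposite.op K)) :=
    preservesColimitsOfShape_of_equiv (AsSmall.equiv (C := Finset (Discrete ℕ))).symm _
  have hc := isColimitOfPreserves (coyoneda.obj (Opposite.op K)) (Statement0Aux.cocIsColimit M)
  obtain ⟨s, g, hg⟩ := Types.jointly_surjective_of_isColimit hc (f ≫ t)
  -- `g : K ⟶ (D M).obj s` with `g ≫ (coc M).ι.app s = f ≫ t`
  have hg' : g ≫ (Statement0Aux.coc M).ι.app s = f ≫ t := hg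
  -- pick `n` with `⟨n⟩ ∉ s`
  set n : ℕ := (s.sup fun d => d.as) + 1 with hn
  have hns : (⟨n⟩ : Discrete ℕ) ∉ s := by
    intro h
    have h' : n ≤ s.sup fun d : Discrete ℕ => d.as :=
      Finset.le_sup (f := fun d : Discrete ℕ => d.as) h
    omega
  have h2 : (Statement0Aux.coc M).ι.app s ≫ coprodToProd M ≫ Pi.π (fun _ : ℕ => M) n = 0 := by
    dsimp [Statement0Aux.coc]
    refine Sigma.hom_ext _ _ (fun ⟨x, hx⟩ => ?_)
    have hxn : x.as ≠ n := by
      intro h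
      exact hns (by rwa [← Discrete.mk_as x, h] at hx)
    erw [Sigma.ι_desc_assoc]
    simp [coprodToProd, hxn]
    exact Limits.comp_zero.symm
  calc f = f ≫ (Pi.lift fun _ : ℕ => 𝟙 M) ≫ Pi.π (fun _ : ℕ => M) n := by simp
    _ = f ≫ t ≫ coprodToProd M ≫ Pi.π (fun _ : ℕ => M) n := by rw [← ht, Category.assoc]
    _ = g ≫ (Statement0Aux.coc M).ι.app s ≫ coprodToProd M ≫ Pi.π (fun _ : ℕ => M) n := by
        simp only [← Category.assoc]; rw [hg']; exact Category.assoc _ _ _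
    _ = 0 := by rw [h2, Limits.comp_zero]

end
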